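/- Let D be a minimal counterexample, C its Hamilton cycle with the stated domination property, and x a vertex of D incident with no green edges such that the edge between x^- and x is red (directed from x^- to x). Then the sets B_b^+(x) and B_b^-(x) are both nonempty. -/

import Mathlib

/-- A 3-coloured tournament on vertex type `V`: between any two distinct
vertices there is exactly one directed edge (`beats`), and `colour x y` gives
the colour (one of three: red, blue, green) of the edge from `x` to `y`
(meaningful when `beats x y` holds). -/
structure CTournament (V : Type*) where
  beats : V → V → Prop
  irrefl : ∀ v, ¬ beats v v
  asymm : ∀ v w, beats v w → ¬ beats w v
  total : ∀ v w, v ≠ w → beats v w ∨ beats w v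
  colour : V → V → Fin 3

namespace CTournament

/-- The colour red. -/
def red : Fin 3 := 0
/-- The colour blue. -/
def blue : Fin 3 := 1
/-- The colour green. -/
def green : Fin 3 := 2

variable {V : Type*} (T : CTournament V)

/-- `x` monochromatically dominates `y` in colour `c`: there is a directed
path (with at least one edge) from `x` to `y` all of whose edges have
colour `c`. -/
def Dom (c : Fin 3) (x y : V) : Prop :=
  Relation.TransGen (fun a b => T.beats a b ∧ T.colour a b = c) x y

/-- `x` monochromatically dominates `y` (in some colour). -/
def MDom (x y : V) : Prop := ∃ c, T.Dom c x y

/-- `x` monochromatically dominates `y` in colour `c` within the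
subtournament induced on the vertex set `S`. -/
def DomIn (S : Set V) (c : Fin 3) (x y : V) : Prop :=
  Relation.TransGen (fun a b => a ∈ S ∧ b ∈ S ∧ T.beats a b ∧ T.colour a b = c) x y

/-- `x` monochromatically dominates `y` within the subtournament induced on `S`. -/
def MDomIn (S : Set V) (x y : V) : Prop := ∃ c, T.DomIn S c x y

/-- `T` contains a `T_3`: three vertices spanning a cyclic triangle whose
three edges have three pairwise distinct colours. -/
def HasT3 : Prop :=
  ∃ a b c : V, T.beats a b ∧ T.beats b c ∧ T.beats c a ∧
    T.colour a b ≠ T.colour b c ∧ T.colour b c ≠ T.colour c a ∧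
    T.colour a b ≠ T.colour c a

/-- Vertex `v` is incident with an edge of colour `c`. -/
def IncidentColour (v : V) (c : Fin 3) : Prop :=
  ∃ w, (T.beats v w ∧ T.colour v w = c) ∨ (T.beats w v ∧ T.colour w v = c)

/-- `T` is a minimal counterexample: it contains no `T_3`, no vertex
monochromatically dominates every other vertex, and every proper nonempty
subset of the vertices spans a subtournament containing a vertex that
monochromatically dominates (within that subtournament) every other vertex
of the subset. -/
def MinimalCex : Prop :=
  ¬ T.HasT3 ∧
  (¬ ∃ x : V, ∀ y, y ≠ x → T.MDom x y) ∧
  ∀ S : Set V, S.Nonempty → S ≠ Set.univ →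
    ∃ x ∈ S, ∀ y ∈ S, y ≠ x → T.MDomIn S x y

/-- The permutation `σ` (sending every vertex to its successor) is a directed
Hamilton cycle of `T`: every vertex beats its successor, and all vertices lie
on a single cycle of `σ`. -/
def IsHamCycle (σ : Equiv.Perm V) : Prop :=
  (∀ v, T.beats v (σ v)) ∧ ∀ v w : V, ∃ n : ℕ, (⇑σ)^[n] v = w

/-- The domination property of the Hamilton cycle `σ`: every vertex
monochromatically dominates every vertex other than itself and its
predecessor on the cycle, and no vertex monochromatically dominates its
predecessor. -/
def HamDomProp (σ : Equiv.Perm V) : Prop :=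
  (∀ x y : V, y ≠ x → y ≠ σ.symm x → T.MDom x y) ∧
  ∀ x : V, ¬ T.MDom x (σ.symm x)

/-- The vertex set of the directed subpath `xCy` of the Hamilton cycle whose
successor permutation is `σ`: all vertices reachable from `x` along the cycle
no later than the first visit of `y`. -/
def PathSet (σ : Equiv.Perm V) (x y : V) : Set V :=
  {z | ∃ k : ℕ, (⇑σ)^[k] x = z ∧ ∀ j < k, (⇑σ)^[j] x ≠ y}

/-- `R^+(x)`: the vertices to which `x` sends a red edge. -/
def Rplus (x : V) : Set V := {v | T.beats x v ∧ T.colour x v = red}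
/-- `R^-(x)`: the vertices from which `x` receives a red edge. -/
def Rminus (x : V) : Set V := {v | T.beats v x ∧ T.colour v x = red}
/-- `B^+(x)`: the vertices to which `x` sends a blue edge. -/
def Bplus (x : V) : Set V := {v | T.beats x v ∧ T.colour x v = blue}
/-- `B^-(x)`: the vertices from which `x` receives a blue edge. -/
def Bminus (x : V) : Set V := {v | T.beats v x ∧ T.colour v x = blue}
/-- `R_r^+(x) = {v ∈ R^+(x) : v monochromatically dominates x in red}`. -/
def Rrplus (x : V) : Set V := {v ∈ T.Rplus x | T.Dom red v x}
/-- `R_r^-(x) = {v ∈ R^-(x) : x monochromatically dominates v in red}`. -/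
def Rrminus (x : V) : Set V := {v ∈ T.Rminus x | T.Dom red x v}
/-- `B_b^+(x) = {v ∈ B^+(x) : v monochromatically dominates x in blue}`. -/
def Bbplus (x : V) : Set V := {v ∈ T.Bplus x | T.Dom blue v x}
/-- `B_b^-(x) = {v ∈ B^-(x) : x monochromatically dominates v in blue}`. -/
def Bbminus (x : V) : Set V := {v ∈ T.Bminus x | T.Dom blue x v}

end CTournament
/-- In a minimal counterexample with Hamilton cycle `σ`, if `x`
is incident with no green edge and the edge from `x⁻` to `x` is red, then the sets
`B_b⁺(x)` and `B_b⁻(x)` are both nonempty. -/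
theorem Bbplus_Bbminus_nonempty {V : Type*} [Fintype V] (T : CTournament V)
    (h : T.MinimalCex) (σ : Equiv.Perm V)
    (hσ : T.IsHamCycle σ) (hprop : T.HamDomProp σ)
    (x : V) (hx : ¬ T.IncidentColour x CTournament.green)
    (hpred : T.beats (σ.symm x) x)
    (hpredred : T.colour (σ.symm x) x = CTournament.red) :
    (T.Bbplus x).Nonempty ∧ (T.Bbminus x).Nonempty := by
  classical
  obtain ⟨hT3, hnoking, hmin⟩ := h
  obtain ⟨hbeats, hcyc⟩ := hσ
  obtain ⟨hdom, hndom⟩ := hprop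
  have hyx : σ x ≠ x := by
    intro e
    have hb := hbeats x
    rw [e] at hb
    exact T.irrefl x hb
  have hpx : σ.symm x ≠ x := by
    intro e
    have hb := hpred
    rw [e] at hb
    exact T.irrefl x hb
  have hyp : σ x ≠ σ.symm x := fun e => T.asymm x (σ x) (hbeats x) (by rw [e]; exact hpred)
  have hcol3 : ∀ c : Fin 3, c = CTournament.red ∨ c = CTournament.blue ∨ c = CTournament.green := by
    decide
  have hnogreen_out : ∀ v, T.beats x v → T.colour x v ≠ CTournament.green :=
    fun v hb hc => hx ⟨v, Or.inl ⟨hb, hc⟩⟩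
  have hnogreen_in : ∀ v, T.beats v x → T.colour v x ≠ CTournament.green :=
    fun v hb hc => hx ⟨v, Or.inr ⟨hb, hc⟩⟩
  have firstcol : ∀ c v, T.Dom c x v → c ≠ CTournament.green := by
    intro c v hd hc
    obtain ⟨b, hb, -⟩ := Relation.TransGen.head'_iff.mp hd
    exact hnogreen_out b hb.1 (hc ▸ hb.2)
  have lastcol : ∀ c v, T.Dom c v x → c ≠ CTournament.green := by
    intro c v hd hc
    obtain ⟨b, -, hbx⟩ := Relation.TransGen.tail'_iff.mp hd
    exact hnogreen_in b hbx.1 (hc ▸ hbx.2)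
  have noking : ∀ u : V, (∀ w, w ≠ u → T.MDom u w) → False := fun u hu => hnoking ⟨u, hu⟩
  have hbluecycle : T.Dom CTournament.blue x x := by
    by_contra hblue
    by_cases h3 : σ (σ (σ x)) = x
    · -- the 3-cycle case
      have hyp2 : σ (σ x) = σ.symm x := by
        have := congrArg σ.symm h3
        rw [Equiv.symm_apply_apply] at this
        exact this
      have hbyp : T.beats (σ x) (σ.symm x) := by rw [← hyp2]; exact hbeats (σ x)
      have hsymmp : σ.symm (σ.symm x) = σ x := by
        rw [← hyp2, Equiv.symm_apply_apply]
      -- colour (σ x) (σ.symm x) ≠ red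
      have hc2 : T.colour (σ x) (σ.symm x) ≠ CTournament.red := by
        intro hc
        apply hndom (σ x)
        rw [Equiv.symm_apply_apply]
        exact ⟨CTournament.red,
          Relation.TransGen.tail (Relation.TransGen.single ⟨hbyp, hc⟩) ⟨hpred, hpredred⟩⟩
      -- colour x (σ x) = blue
      have hγr : T.colour x (σ x) ≠ CTournament.red := by
        intro hc
        apply hndom (σ.symm x)
        rw [hsymmp]
        exact ⟨CTournament.red,
          Relation.TransGen.tail (Relation.TransGen.single ⟨hpred, hpredred⟩) ⟨hbeats x, hc⟩⟩
      have hγb : T.colour x (σ x) = CTournament.blue := by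
        rcases hcol3 (T.colour x (σ x)) with hc | hc | hc
        · exact absurd hc hγr
        · exact hc
        · exact absurd hc (hnogreen_out (σ x) (hbeats x))
      have hc2g : T.colour (σ x) (σ.symm x) ≠ CTournament.green := by
        intro hc
        exact hT3 ⟨x, σ x, σ.symm x, hbeats x, hbyp, hpred,
          by rw [hγb, hc]; decide, by rw [hc, hpredred]; decide, by rw [hγb, hpredred]; decide⟩
      have hc2b : T.colour (σ x) (σ.symm x) = CTournament.blue := by
        rcases hcol3 (T.colour (σ x) (σ.symm x)) with hc | hc | hc
        · exact absurd hc hc2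
        · exact hc
        · exact absurd hc hc2g
      exact hndom x ⟨CTournament.blue,
        Relation.TransGen.tail (Relation.TransGen.single ⟨hbeats x, hγb⟩) ⟨hbyp, hc2b⟩⟩
    · -- the main case
      have step : ∀ u, T.Dom CTournament.red u x → ∀ v, σ.symm u = v → v ≠ x →
          v ≠ σ.symm x → v ≠ σ x →
          T.Dom CTournament.blue x v ∧ T.Dom CTournament.red v x ∧
            ¬ T.Dom CTournament.red x v := by
        intro u hu v hv hvx hvp hvy
        have hnotR : ¬ T.Dom CTournament.red x v := by
          intro hR
          apply noking u
          intro w hw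
          by_cases hwv : w = v
          · exact ⟨CTournament.red, Relation.TransGen.trans hu (hwv ▸ hR)⟩
          · exact hdom u w hw (fun e => hwv (e.trans hv))
        have hS : T.Dom CTournament.blue x v := by
          obtain ⟨c, hc⟩ := hdom x v hvx hvp
          rcases hcol3 c with rfl | rfl | rfl
          · exact absurd hc hnotR
          · exact hc
          · exact absurd rfl (firstcol _ _ hc)
        refine ⟨hS, ?_, hnotR⟩
        have hxsv : x ≠ σ.symm v := by
          intro e
          exact hvy ((congrArg σ e).trans (σ.apply_symm_apply v)).symm
        obtain ⟨c, hc⟩ := hdom v x (Ne.symm hvx) hxsv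
        rcases hcol3 c with rfl | rfl | rfl
        · exact hc
        · exact absurd (Relation.TransGen.trans hS hc) hblue
        · exact absurd rfl (lastcol _ _ hc)
      have hpdomx : T.Dom CTournament.red (σ.symm x) x :=
        Relation.TransGen.single ⟨hpred, hpredred⟩
      have chain : ∀ k : ℕ, ∀ v, σ.symm^[k] x = v → v ≠ x → v ≠ σ.symm x → v ≠ σ x →
          T.Dom CTournament.blue x v ∧ T.Dom CTournament.red v x ∧
            ¬ T.Dom CTournament.red x v := by
        intro k
        induction k using Nat.strong_induction_on with
        | _ k ih =>
          rcases k with _ | k'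
          · intro v hkv hvx _ _
            exact (hvx (by simpa using hkv.symm)).elim
          · intro v hkv hvx hvp hvy
            have hv' : σ.symm (σ.symm^[k'] x) = v := by
              rw [← hkv, Function.iterate_succ_apply']
            by_cases hux : σ.symm^[k'] x = x
            · rw [hux] at hv'
              exact absurd hv'.symm hvp
            by_cases hup : σ.symm^[k'] x = σ.symm x
            · exact step (σ.symm x) hpdomx v (by rw [← hup]; exact hv') hvx hvp hvy
            by_cases huy : σ.symm^[k'] x = σ x
            · rw [huy, Equiv.symm_apply_apply] at hv'
              exact absurd hv'.symm hvx
            · obtain ⟨-, hured, -⟩ := ih k' (Nat.lt_succ_self k') (σ.symm^[k'] x) rfl hux hup huy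
              exact step (σ.symm^[k'] x) hured v hv' hvx hvp hvy
      have hrep : ∀ v : V, ∃ k, σ.symm^[k] x = v := by
        intro v
        obtain ⟨k, hk⟩ := hcyc v x
        refine ⟨k, ?_⟩
        rw [← hk]
        exact (Function.LeftInverse.iterate σ.symm_apply_apply k) v
      have chain' : ∀ v, v ≠ x → v ≠ σ.symm x → v ≠ σ x →
          T.Dom CTournament.blue x v ∧ T.Dom CTournament.red v x ∧
            ¬ T.Dom CTournament.red x v := by
        intro v h1 h2 h3'
        obtain ⟨k, hk⟩ := hrep v
        exact chain k v hk h1 h2 h3'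
      -- the vertex σ (σ x)
      have h2x : σ (σ x) ≠ x := by
        intro e
        apply hyp
        have := congrArg σ.symm e
        rw [Equiv.symm_apply_apply] at this
        exact this
      have h2p : σ (σ x) ≠ σ.symm x := by
        intro e
        apply h3
        rw [e, Equiv.apply_symm_apply]
      have h2y : σ (σ x) ≠ σ x := fun e => hyx (σ.injective e)
      have hu2 := chain' (σ (σ x)) h2x h2p h2y
      have ynotR : ¬ T.Dom CTournament.red x (σ x) := by
        intro hR
        apply hndom (σ (σ x))
        rw [Equiv.symm_apply_apply]
        exact ⟨CTournament.red, Relation.TransGen.trans hu2.2.1 hR⟩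
      have hySb : T.Dom CTournament.blue x (σ x) := by
        obtain ⟨c, hc⟩ := hdom x (σ x) hyx hyp
        rcases hcol3 c with rfl | rfl | rfl
        · exact absurd hc ynotR
        · exact hc
        · exact absurd rfl (firstcol _ _ hc)
      have hxout : ∀ v, T.beats x v → T.colour x v = CTournament.blue := by
        intro v hbv
        have hvx : v ≠ x := fun e => T.irrefl x (e ▸ hbv)
        rcases hcol3 (T.colour x v) with hcv | hcv | hcv
        · exfalso
          have hRv : T.Dom CTournament.red x v := Relation.TransGen.single ⟨hbv, hcv⟩
          by_cases h1 : v = σ.symm x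
          · exact hndom x ⟨CTournament.red, h1 ▸ hRv⟩
          by_cases h2 : v = σ x
          · exact ynotR (h2 ▸ hRv)
          · exact (chain' v hvx h1 h2).2.2 hRv
        · exact hcv
        · exact absurd hcv (hnogreen_out v hbv)
      have hxin : ∀ v, T.beats v x → T.colour v x = CTournament.red := by
        intro v hbv
        have hvx : v ≠ x := fun e => T.irrefl x (e ▸ hbv)
        rcases hcol3 (T.colour v x) with hcv | hcv | hcv
        · exact hcv
        · exfalso
          have hbl : T.Dom CTournament.blue x v → False := fun hS =>
            hblue (Relation.TransGen.trans hS (Relation.TransGen.single ⟨hbv, hcv⟩))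
          by_cases h1 : v = σ.symm x
          · rw [h1] at hcv
            exact absurd (hpredred.symm.trans hcv) (by decide)
          by_cases h2 : v = σ x
          · exact hbl (h2 ▸ hySb)
          · exact hbl (chain' v hvx h1 h2).1
        · exact absurd hcv (hnogreen_in v hbv)
      have hynored : ∀ w, T.beats (σ x) w → T.colour (σ x) w ≠ CTournament.red := by
        intro w hbw hcw
        apply hndom (σ x)
        rw [Equiv.symm_apply_apply]
        have hwx : w ≠ x := fun e => T.asymm x (σ x) (hbeats x) (e ▸ hbw)
        by_cases h1 : w = σ.symm x
        · exact ⟨CTournament.red,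
            Relation.TransGen.tail (Relation.TransGen.single ⟨hbw, hcw⟩)
              (by rw [h1]; exact ⟨hpred, hpredred⟩)⟩
        by_cases h2 : w = σ x
        · exact absurd (h2 ▸ hbw) (T.irrefl (σ x))
        · exact ⟨CTournament.red,
            Relation.TransGen.trans (Relation.TransGen.single ⟨hbw, hcw⟩)
              (chain' w hwx h1 h2).2.1⟩
      -- minimality applied to the complement of x
      obtain ⟨w, hwA, hwk⟩ := hmin ({x}ᶜ : Set V)
        ⟨σ.symm x, Set.mem_compl_singleton_iff.mpr hpx⟩
        (by
          intro e
          have hxA : x ∈ ({x}ᶜ : Set V) := by rw [e]; trivial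
          exact hxA rfl)
      have hwy : w = σ x := by
        by_contra hne
        have h1 : σ.symm w ≠ x := by
          intro e
          apply hne
          rw [← e, Equiv.apply_symm_apply]
        have h2 : σ.symm w ≠ w := by
          intro e
          apply T.irrefl w
          have hb := hbeats w
          have hww : σ w = w := by
            conv_lhs => rw [← e]
            rw [Equiv.apply_symm_apply]
          rw [hww] at hb
          exact hb
        obtain ⟨c, hc⟩ := hwk (σ.symm w) (Set.mem_compl_singleton_iff.mpr h1) h2
        exact hndom w ⟨c, Relation.TransGen.mono (fun a b hab => ⟨hab.2.2.1, hab.2.2.2⟩) _ _ hc⟩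
      rw [hwy] at hwk
      obtain ⟨c, hcpath⟩ := hwk (σ.symm x) (Set.mem_compl_singleton_iff.mpr hpx) (Ne.symm hyp)
      rcases hcol3 c with rfl | rfl | rfl
      · -- red path from σ x : first edge is a red out-edge of σ x
        obtain ⟨b, hb, -⟩ := Relation.TransGen.head'_iff.mp hcpath
        exact hynored b hb.2.2.1 hb.2.2.2
      · -- blue path from σ x to σ.symm x gives MDom x (σ.symm x)
        have : T.Dom CTournament.blue (σ x) (σ.symm x) :=
          Relation.TransGen.mono (fun a b hab => ⟨hab.2.2.1, hab.2.2.2⟩) _ _ hcpath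
        exact hndom x ⟨CTournament.blue, Relation.TransGen.trans hySb this⟩
      · -- green path : induction shows x beats every vertex of the path
        have hclaim : ∀ v, Relation.TransGen
            (fun a b => a ∈ ({x}ᶜ : Set V) ∧ b ∈ ({x}ᶜ : Set V) ∧ T.beats a b ∧
              T.colour a b = CTournament.green) (σ x) v → T.beats x v := by
          intro v hv
          induction hv with
          | single hh =>
            rename_i b
            have hbx : b ≠ x := Set.mem_compl_singleton_iff.mp hh.2.1
            rcases T.total x b (Ne.symm hbx) with hxb | hbx'
            · exact hxb
            · exact (hT3 ⟨x, σ x, b, hbeats x, hh.2.2.1, hbx',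
                by rw [hxout (σ x) (hbeats x), hh.2.2.2]; decide,
                by rw [hh.2.2.2, hxin b hbx']; decide,
                by rw [hxout (σ x) (hbeats x), hxin b hbx']; decide⟩).elim
          | tail hb hh ih =>
            rename_i b v'
            have hvx : v' ≠ x := Set.mem_compl_singleton_iff.mp hh.2.1
            rcases T.total x v' (Ne.symm hvx) with hxv | hvx'
            · exact hxv
            · exact (hT3 ⟨x, b, v', ih, hh.2.2.1, hvx',
                by rw [hxout b ih, hh.2.2.2]; decide,
                by rw [hh.2.2.2, hxin v' hvx']; decide,
                by rw [hxout b ih, hxin v' hvx']; decide⟩).elim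
        exact T.asymm (σ.symm x) x hpred (hclaim (σ.symm x) hcpath)
  constructor
  · obtain ⟨b, hb, hrt⟩ := Relation.TransGen.head'_iff.mp hbluecycle
    rcases Relation.reflTransGen_iff_eq_or_transGen.mp hrt with he | htg
    · rw [he] at hb
      exact absurd hb.1 (T.irrefl b)
    · exact ⟨b, ⟨hb, htg⟩⟩
  · obtain ⟨b, hrt, hbx⟩ := Relation.TransGen.tail'_iff.mp hbluecycle
    rcases Relation.reflTransGen_iff_eq_or_transGen.mp hrt with he | htg
    · rw [he] at hbx
      exact absurd hbx.1 (T.irrefl x)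
    · exact ⟨b, ⟨hbx, htg⟩⟩
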